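/- Let J be a Hermitian complex structure on V. Then the linear map L restricted to ker(K_J) is surjective onto the space of Kaehler algebraic curvature tensors: for every algebraic curvature tensor A on V satisfying the Kaehler identity A(x,y,z,w) = A(Jx,Jy,z,w) for all x,y,z,w, there exists Θ ∈ S²₊(V*)⊗S²(V*) with K_JΘ = 0 and LΘ = A. -/

import Mathlib

open scoped RealInnerProductSpace

/-- `L` restricted to `ker K_J` is surjective onto the space of Kaehler algebraic
curvature tensors: every algebraic curvature tensor satisfying the Kaehler identity
is of the form `LΘ` for some `Θ ∈ S²₊(V*)⊗S²(V*)` with `K_JΘ = 0`. -/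
theorem L_surjective_onto_kaehler_tensors
    {V : Type*} [NormedAddCommGroup V] [InnerProductSpace ℝ V] [FiniteDimensional ℝ V]
    {n : ℕ} (hdim : Module.finrank ℝ V = 2 * n) (hm : 4 ≤ Module.finrank ℝ V)
    (J : V →ₗ[ℝ] V)
    (hJ2 : ∀ x : V, J (J x) = -x)
    (hJi : ∀ x y : V, ⟪J x, J y⟫ = ⟪x, y⟫)
    (A : V →ₗ[ℝ] V →ₗ[ℝ] V →ₗ[ℝ] V →ₗ[ℝ] ℝ)
    (hA1 : ∀ x y z w : V, A x y z w = - A y x z w)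
    (hA2 : ∀ x y z w : V, A x y z w = A z w x y)
    (hA3 : ∀ x y z w : V, A x y z w + A y z x w + A z x y w = 0)
    (hK : ∀ x y z w : V, A x y z w = A (J x) (J y) z w) :
    ∃ Θ : V →ₗ[ℝ] V →ₗ[ℝ] V →ₗ[ℝ] V →ₗ[ℝ] ℝ,
      (∀ x y z w : V, Θ x y z w = Θ y x z w) ∧
      (∀ x y z w : V, Θ x y z w = Θ x y w z) ∧
      (∀ x y z w : V, Θ (J x) (J y) z w = Θ x y z w) ∧
      (∀ x y z w : V, Θ x (J y) z w + Θ y (J z) x w + Θ z (J x) y w = 0) ∧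
      (∀ x y z w : V, Θ x z y w + Θ y w x z - Θ x w y z - Θ y z x w = A x y z w) := by
  -- construct Θ with Θ x y z w = (1/2) * A x (J y) z (J w)
  have key : ∃ Θ : V →ₗ[ℝ] V →ₗ[ℝ] V →ₗ[ℝ] V →ₗ[ℝ] ℝ,
      ∀ x y z w : V, Θ x y z w = 2⁻¹ * A x (J y) z (J w) := by
    refine ⟨(2⁻¹ : ℝ) •
      ((LinearMap.llcomp ℝ V (V →ₗ[ℝ] V →ₗ[ℝ] ℝ) (V →ₗ[ℝ] V →ₗ[ℝ] ℝ)
        (LinearMap.llcomp ℝ V (V →ₗ[ℝ] ℝ) (V →ₗ[ℝ] ℝ) (LinearMap.lcomp ℝ ℝ J))).comp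
        (A.compl₂ J)), fun x y z w => ?_⟩
    simp only [LinearMap.smul_apply, LinearMap.comp_apply, LinearMap.llcomp_apply,
      LinearMap.lcomp_apply, LinearMap.compl₂_apply, smul_eq_mul]
  obtain ⟨Θ, hΘ⟩ := key
  -- derived identities
  have hJ2' : ∀ a b c d : V, A a (J (J b)) c d = -A a b c d := by
    intro a b c d
    rw [hJ2, map_neg, LinearMap.neg_apply, LinearMap.neg_apply]
  have hskew34 : ∀ a b c d : V, A a b c d = -A a b d c := by
    intro a b c d
    rw [hA2 a b c d, hA1 c d a b, hA2 d c a b]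
  have hK34 : ∀ a b c d : V, A a b (J c) (J d) = A a b c d := by
    intro a b c d
    rw [hA2 a b (J c) (J d), ← hK c d a b, hA2 c d a b]
  have hJswap12 : ∀ a b c d : V, A a (J b) c d = -A (J a) b c d := by
    intro a b c d
    have h := hK (J a) b c d
    have e : A (-a) (J b) c d + A a (J b) c d = 0 := by
      rw [← LinearMap.add_apply, ← LinearMap.add_apply, ← LinearMap.add_apply, ← map_add,
        neg_add_cancel, map_zero, LinearMap.zero_apply, LinearMap.zero_apply,
        LinearMap.zero_apply]
    rw [hJ2] at h
    linarith
  have hJswap34 : ∀ a b c d : V, A a b c (J d) = -A a b (J c) d := by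
    intro a b c d
    have h := hK34 a b c (J d)
    rw [hJ2, map_neg] at h
    linarith
  refine ⟨Θ, ?_, ?_, ?_, ?_, ?_⟩ <;> intro x y z w <;> simp only [hΘ]
  · -- symmetry in first two slots
    have h1 := hJswap12 x y z (J w)
    have h2 := hA1 (J x) y z (J w)
    linarith
  · -- symmetry in last two slots
    have h1 := hJswap34 x (J y) z w
    have h2 := hskew34 x (J y) (J z) w
    linarith
  · -- J-invariance
    have h1 := hJ2' (J x) y z (J w)
    have h2 := hJswap12 x y z (J w)
    linarith
  · -- K_J Θ = 0
    have h1 := hJ2' x y z (J w)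
    have h2 := hJ2' y z x (J w)
    have h3 := hJ2' z x y (J w)
    have h4 := hA3 x y z (J w)
    linarith
  · -- L Θ = A
    have h1 := hA2 y (J w) x (J z)
    have h2 := hA2 y (J z) x (J w)
    have h3 := hA3 x (J z) y (J w)
    have h4 := hA1 (J z) y x (J w)
    have h5 := hK34 y x z w
    have h6 := hA1 y x z w
    linarith
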